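/- Let A be a unital C*-algebra and p ∈ A an orthogonal projection (p = p* = p²). Then the multiplication operator M_{p,p}(x) = pxp is a hermitian element of B(A) (i.e., its numerical range is real) if and only if upu*p is hermitian in A for every unitary u ∈ A. -/

import Mathlib

set_option linter.unusedSectionVars false
set_option maxHeartbeats 1000000


/-- Algebra numerical range of an element of a complex unital Banach algebra,
defined via states: `V(a) = {f a : f ∈ A*, ‖f‖ = 1 = f 1}`. -/
def numRange (A : Type*) [NormedRing A] [NormedAlgebra ℂ A] (a : A) : Set ℂ :=
  {z | ∃ f : A →L[ℂ] ℂ, ‖f‖ = 1 ∧ f 1 = 1 ∧ f a = z}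

noncomputable section AuxSection

variable {A : Type*} [NormedRing A] [StarRing A] [CStarRing A] [CompleteSpace A]
    [NormedAlgebra ℂ A] [StarModule ℂ A] [NormOneClass A]

private lemma state_im_eq_zero (f : A →L[ℂ] ℂ) (hf : ‖f‖ = 1) (hf1 : f 1 = 1)
    {h : A} (hh : star h = h) : (f h).im = 0 := by
  by_contra hβ
  set α := (f h).re with hα
  set β := (f h).im with hβ'
  have key : ∀ t : ℝ, α^2 + (β + t)^2 ≤ ‖h‖^2 + t^2 := by
    intro t
    set c : A := h + (Complex.I * t) • 1 with hc
    have hfc : f c = f h + Complex.I * t := by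
      rw [hc, map_add, map_smul, hf1]
      simp [smul_eq_mul]
    have hstar : star c = h - (Complex.I * t) • 1 := by
      rw [hc, star_add, star_smul, star_one, hh]
      simp [sub_eq_add_neg, ← neg_smul]
    have hprod : star c * c = h * h + ((t:ℂ)^2) • 1 := by
      rw [hstar, hc]
      have hI : Complex.I * (t:ℂ) * (Complex.I * (t:ℂ)) = -((t:ℂ)^2) := by
        rw [mul_mul_mul_comm, Complex.I_mul_I]; ring
      simp only [sub_mul, mul_add, smul_mul_assoc, mul_smul_comm, smul_smul, one_mul, mul_one,
        smul_sub]
      rw [hI, neg_smul]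
      abel
    have hnorm2 : ‖c‖^2 ≤ ‖h‖^2 + t^2 := by
      have h1 : ‖c‖^2 = ‖star c * c‖ := by
        rw [CStarRing.norm_star_mul_self, sq]
      rw [h1, hprod]
      calc ‖h * h + ((t:ℂ)^2) • (1:A)‖ ≤ ‖h * h‖ + ‖((t:ℂ)^2) • (1:A)‖ := norm_add_le _ _
        _ ≤ ‖h‖ * ‖h‖ + ‖((t:ℂ)^2)‖ * ‖(1:A)‖ := by
            gcongr
            · exact norm_mul_le _ _
            · exact (norm_smul _ _).le
        _ = ‖h‖^2 + t^2 := by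
            rw [norm_one, mul_one, ← sq, norm_pow, Complex.norm_real, Real.norm_eq_abs, sq_abs]
    have hfc2 : ‖f c‖^2 = α^2 + (β + t)^2 := by
      rw [hfc]
      rw [Complex.sq_norm, Complex.normSq_apply]
      simp only [Complex.add_re, Complex.add_im, Complex.mul_re, Complex.mul_im, Complex.I_re,
        Complex.I_im, Complex.ofReal_re, Complex.ofReal_im]
      ring
    have hle : ‖f c‖ ≤ ‖c‖ := by
      calc ‖f c‖ ≤ ‖f‖ * ‖c‖ := f.le_opNorm c
        _ = ‖c‖ := by rw [hf, one_mul]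
    nlinarith [norm_nonneg (f c), norm_nonneg c]
  have h2β : 2*β ≠ 0 := by simpa using hβ
  have ht := key ((‖h‖^2 + 1)/(2*β))
  have hcan : 2*β*((‖h‖^2 + 1)/(2*β)) = ‖h‖^2 + 1 := mul_div_cancel₀ _ h2β
  nlinarith [sq_nonneg α, sq_nonneg β, sq_nonneg ((‖h‖^2 + 1)/(2*β))]

private lemma exists_state_ne_zero {k : A} (hk : star k = k) (hk0 : k ≠ 0) :
    ∃ f : A →L[ℂ] ℂ, ‖f‖ = 1 ∧ f 1 = 1 ∧ f k ≠ 0 := by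
  letI : CStarAlgebra A :=
    { ‹NormedRing A›, ‹StarRing A›, ‹NormedAlgebra ℂ A›, ‹StarModule ℂ A›, ‹CStarRing A›,
      ‹CompleteSpace A› with }
  haveI : IsStarNormal k := ⟨by rw [hk]⟩
  have hone : (1 : A) ≠ 0 := by
    intro h
    have := norm_one (α := A)
    rw [h, norm_zero] at this
    exact zero_ne_one this
  haveI : Nontrivial A := nontrivial_of_ne 1 0 hone
  obtain ⟨z, hz, hznorm⟩ := spectrum.exists_nnnorm_eq_spectralRadius (a := k)
  have hksa : IsSelfAdjoint k := hk
  have hzk : ‖z‖ = ‖k‖ := by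
    rw [hksa.spectralRadius_eq_nnnorm] at hznorm
    exact_mod_cast congrArg ENNReal.toReal hznorm
  have hz0 : z ≠ 0 := by
    intro h
    rw [h, norm_zero] at hzk
    exact hk0 (norm_eq_zero.mp hzk.symm)
  obtain ⟨φ, hφ⟩ := (StarAlgebra.elemental.bijective_characterSpaceToSpectrum k).2 ⟨z, hz⟩
  have hφk : φ ⟨k, StarAlgebra.elemental.self_mem ℂ k⟩ = z := congrArg Subtype.val hφ
  haveI : Nontrivial (StarAlgebra.elemental ℂ k) := nontrivial_of_ne 1 0
    (fun h => hone (congrArg Subtype.val h))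
  let pB : Submodule ℂ A := Subalgebra.toSubmodule (StarAlgebra.elemental ℂ k).toSubalgebra
  let l : pB →ₗ[ℂ] ℂ :=
    { toFun := fun x => φ (⟨x.1, x.2⟩ : StarAlgebra.elemental ℂ k)
      map_add' := fun x y => map_add φ ⟨x.1, x.2⟩ ⟨y.1, y.2⟩
      map_smul' := fun c x => map_smul φ c ⟨x.1, x.2⟩ }
  have hlb : ∀ x : pB, ‖l x‖ ≤ 1 * ‖x‖ := by
    intro x
    rw [one_mul]
    have hsp := AlgHom.apply_mem_spectrum (φ : StarAlgebra.elemental ℂ k →ₐ[ℂ] ℂ) (⟨x.1, x.2⟩ : StarAlgebra.elemental ℂ k)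
    have := spectrum.norm_le_norm_of_mem hsp
    exact this
  let f₀ : pB →L[ℂ] ℂ := LinearMap.mkContinuous l 1 hlb
  have h1mem : (1 : A) ∈ pB := (StarAlgebra.elemental ℂ k).toSubalgebra.one_mem
  have hf₀1 : f₀ ⟨1, h1mem⟩ = 1 := by
    show φ ⟨1, _⟩ = 1
    exact map_one φ
  have hf₀norm : ‖f₀‖ = 1 := by
    refine le_antisymm (LinearMap.mkContinuous_norm_le l zero_le_one hlb) ?_
    have := f₀.le_opNorm ⟨1, h1mem⟩
    rw [hf₀1] at this
    have hn1 : ‖(⟨1, h1mem⟩ : pB)‖ = 1 := norm_one (α := A)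
    rw [hn1, mul_one] at this
    simpa using this
  obtain ⟨g, hg, hgnorm⟩ := exists_extension_norm_eq pB f₀
  refine ⟨g, by rw [hgnorm, hf₀norm], ?_, ?_⟩
  · have := hg ⟨1, h1mem⟩
    rwa [hf₀1] at this
  · have hkmem : k ∈ pB := StarAlgebra.elemental.self_mem ℂ k
    have := hg ⟨k, hkmem⟩
    have hfk : f₀ ⟨k, hkmem⟩ = z := by
      show φ (⟨k, StarAlgebra.elemental.self_mem ℂ k⟩ : StarAlgebra.elemental ℂ k) = z
      exact hφk
    rw [hfk] at this
    rw [this]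
    exact hz0

private lemma decomp_aux (a : A) :
    a = ((1:ℂ)/2) • (a + star a) + Complex.I • ((-(Complex.I/2)) • (a - star a)) := by
  rw [smul_smul]
  have : Complex.I * (-(Complex.I/2)) = 1/2 := by
    rw [mul_neg, ← mul_div_assoc, Complex.I_mul_I]
    norm_num
  rw [this]
  module

lemma star_eq_of_states_real {a : A}
    (ha : ∀ f : A →L[ℂ] ℂ, ‖f‖ = 1 → f 1 = 1 → (f a).im = 0) : star a = a := by
  set h₁ : A := ((1:ℂ)/2) • (a + star a) with hh₁
  set h₂ : A := (-(Complex.I/2)) • (a - star a) with hh₂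
  have hsa₁ : star h₁ = h₁ := by
    rw [hh₁, star_smul, star_add, star_star]
    simp [add_comm]
  have hsa₂ : star h₂ = h₂ := by
    rw [hh₂, star_smul, star_sub, star_star]
    simp [Complex.conj_I]
    module
  have hzero : h₂ = 0 := by
    by_contra hne
    obtain ⟨f, hf, hf1, hfk⟩ := exists_state_ne_zero hsa₂ hne
    apply hfk
    have r1 := state_im_eq_zero f hf hf1 hsa₁
    have r2 := state_im_eq_zero f hf hf1 hsa₂
    have hdec : a = h₁ + Complex.I • h₂ := by rw [hh₁, hh₂]; exact decomp_aux a
    have hfa : f a = f h₁ + Complex.I * f h₂ := by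
      conv_lhs => rw [hdec]
      rw [map_add, map_smul]
      simp [smul_eq_mul]
    have him := ha f hf hf1
    rw [hfa] at him
    simp only [Complex.add_im, Complex.mul_im, Complex.I_re, Complex.I_im] at him
    rw [r1, r2] at him
    simp at him
    exact Complex.ext him r2
  have : a - star a = 0 := by
    have hne : -(Complex.I/2) ≠ 0 := by simp [Complex.I_ne_zero]
    rw [hh₂] at hzero
    exact (smul_eq_zero.mp hzero).resolve_left hne
  rw [sub_eq_zero] at this
  exact this.symm

lemma central_of_comm (p : A) (hp_idem : p * p = p)
    (hcond : ∀ u : unitary A, (u : A) * p * star (u : A) * p = p * ((u : A) * p * star (u : A))) :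
    ∀ x : A, p * x = x * p := by
  have hsa : ∀ h : A, star h = h → p * h = h * p := by
    intro h hh
    set w : A := Complex.I • h with hw
    have hws : star w = -w := by
      rw [hw, star_smul, hh]
      simp [Complex.star_def, Complex.conj_I, neg_smul]
    have hsmul : ∀ t : ℝ, star (t • w) = -(t • w) := by
      intro t
      have h1 : t • w = ((t : ℂ)) • w := (algebraMap_smul ℂ t w).symm
      rw [h1, star_smul, hws]
      simp
    have hmem : ∀ t : ℝ, NormedSpace.exp (t • w) ∈ unitary A := by
      intro t
      letI : NormedAlgebra ℚ A := NormedAlgebra.restrictScalars ℚ ℂ A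
      exact NormedSpace.exp_mem_unitary_of_mem_skewAdjoint (skewAdjoint.mem_iff.mpr (hsmul t))
    have hstarE : ∀ t : ℝ, star (NormedSpace.exp (t • w)) = NormedSpace.exp (t • (-w)) := by
      intro t
      rw [NormedSpace.star_exp, hsmul t, ← smul_neg]
    have hE : HasDerivAt (fun t : ℝ => NormedSpace.exp (t • w)) w 0 := by
      have := hasDerivAt_exp_smul_const (𝕂 := ℝ) w (0:ℝ)
      simpa using this
    have hS : HasDerivAt (fun t : ℝ => NormedSpace.exp (t • (-w))) (-w) 0 := by
      have := hasDerivAt_exp_smul_const (𝕂 := ℝ) (-w) (0:ℝ)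
      simpa using this
    have hG : (fun t : ℝ => NormedSpace.exp (t • w) * p * NormedSpace.exp (t • (-w)) * p
        - p * (NormedSpace.exp (t • w) * p * NormedSpace.exp (t • (-w)))) = fun _ => (0:A) := by
      funext t
      have hc := hcond ⟨NormedSpace.exp (t • w), hmem t⟩
      simp only [Subtype.coe_mk] at hc
      rw [show star (NormedSpace.exp (t • w)) = NormedSpace.exp (t • (-w)) from hstarE t] at hc
      rw [sub_eq_zero]
      exact hc
    have hd1 := (hE.mul_const p).mul hS
    have hd2 := hd1.mul_const p
    have hd3 := hd1.const_mul p
    have hd : HasDerivAt (fun t : ℝ => NormedSpace.exp (t • w) * p * NormedSpace.exp (t • (-w)) * p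
        - p * (NormedSpace.exp (t • w) * p * NormedSpace.exp (t • (-w)))) _ 0 := hd2.sub hd3
    rw [hG] at hd
    have h0 : HasDerivAt (fun _ : ℝ => (0:A)) 0 0 := hasDerivAt_const _ _
    have heq := h0.unique hd
    simp only [zero_smul, NormedSpace.exp_zero, one_mul, mul_one] at heq
    -- heq : 0 = (w*p*1 + 1*p*(-w))*p - p*(w*p*1 + 1*p*(-w)) roughly
    have hassoc : ∀ y : A, p * (p * y) = p * y := fun y => by rw [← mul_assoc, hp_idem]
    have h2 : w * p - p * (w * p) = p * (w * p) - p * w := by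
      have := heq.symm
      rw [sub_eq_zero] at this
      simp only [mul_neg, neg_mul, add_mul, mul_add, mul_assoc, hp_idem, hassoc] at this
      simpa [sub_eq_add_neg] using this
    have hL : p * w = p * (w * p) := by
      have h3 := congrArg (fun y => p * y) h2
      simp only [mul_sub, hassoc] at h3
      rw [sub_self] at h3
      exact (sub_eq_zero.mp h3.symm).symm
    have hR : w * p = p * (w * p) := by
      have h3 := congrArg (fun y => y * p) h2
      simp only [sub_mul, mul_assoc, hp_idem, hassoc] at h3
      rw [sub_self] at h3
      exact sub_eq_zero.mp h3
    have hpw : p * w = w * p := by rw [hL, ← hR]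
    -- translate back to h
    have : p * (Complex.I • h) = (Complex.I • h) * p := hpw
    rw [mul_smul_comm, smul_mul_assoc] at this
    have := congrArg (fun y => (Complex.I)⁻¹ • y) this
    simpa [smul_smul, inv_mul_cancel₀ Complex.I_ne_zero] using this
  intro x
  have hdecx : x = ((1:ℂ)/2) • (x + star x) + (-(Complex.I/2)) • (Complex.I • (x - star x)) := by
    rw [smul_smul]
    have : -(Complex.I/2) * Complex.I = 1/2 := by
      rw [neg_mul, div_mul_eq_mul_div, Complex.I_mul_I]
      norm_num
    rw [this]
    module
  have c1 := hsa (x + star x) (by rw [star_add, star_star, add_comm])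
  have c2 := hsa (Complex.I • (x - star x)) (by
    rw [star_smul, star_sub, star_star]
    simp [Complex.star_def, Complex.conj_I]
    module)
  conv_lhs => rw [hdecx]
  conv_rhs => rw [hdecx]
  rw [mul_add, add_mul, mul_smul_comm, mul_smul_comm, smul_mul_assoc, smul_mul_assoc, c1, c2]

private lemma im_zero_of_circle (z : ℂ) (hb : ∀ w : ℂ, ‖w‖ = 1 → ‖1 + (w - 1) * z‖ ≤ 1) :
    z.im = 0 := by
  by_cases hz0 : z = 0
  · simp [hz0]
  by_cases hz1 : (1:ℂ) - z = 0
  · have : z = 1 := by linear_combination -hz1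
    simp [this]
  have hnz : ‖z‖ ≠ 0 := norm_ne_zero_iff.mpr hz0
  have hnz1 : ‖(1:ℂ) - z‖ ≠ 0 := norm_ne_zero_iff.mpr hz1
  have hnzc : ((‖z‖ : ℝ) : ℂ) ≠ 0 := by exact_mod_cast hnz
  have hnz1c : ((‖(1:ℂ) - z‖ : ℝ) : ℂ) ≠ 0 := by exact_mod_cast hnz1
  set w : ℂ := ((‖z‖ : ℂ) * (1 - z)) / (z * (‖(1:ℂ) - z‖ : ℂ)) with hws
  have hw : ‖w‖ = 1 := by
    rw [hws, norm_div, norm_mul, norm_mul, Complex.norm_real, Complex.norm_real,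
      Real.norm_eq_abs, Real.norm_eq_abs, abs_of_nonneg (norm_nonneg _),
      abs_of_nonneg (norm_nonneg _)]
    exact div_self (mul_ne_zero hnz hnz1)
  have hwz : w * z = ((‖z‖ : ℂ) * (1 - z)) / (‖(1:ℂ) - z‖ : ℂ) := by
    rw [hws, div_mul_eq_mul_div,
      show (‖z‖:ℂ) * (1-z) * z = z * ((‖z‖:ℂ) * (1-z)) by ring,
      mul_div_mul_left _ _ hz0]
  have hcompute : 1 + (w - 1) * z = (1 - z) * (1 + (‖z‖ : ℂ) / (‖(1:ℂ) - z‖ : ℂ)) := by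
    have expand : 1 + (w - 1) * z = 1 - z + w * z := by ring
    rw [expand, hwz]
    field_simp
  have hnorm : ‖1 + (w - 1) * z‖ = ‖(1:ℂ) - z‖ + ‖z‖ := by
    rw [hcompute, norm_mul]
    have habs : ‖1 + (‖z‖ : ℂ) / (‖(1:ℂ) - z‖ : ℂ)‖ = 1 + ‖z‖ / ‖(1:ℂ) - z‖ := by
      rw [show (1 : ℂ) + (‖z‖ : ℂ) / (‖(1:ℂ) - z‖ : ℂ) = ((1 + ‖z‖ / ‖(1:ℂ) - z‖ : ℝ) : ℂ) by
        push_cast; ring]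
      rw [Complex.norm_real, Real.norm_eq_abs, abs_of_nonneg]
      positivity
    rw [habs, mul_add, mul_one]
    have : ‖(1:ℂ) - z‖ * (‖z‖ / ‖(1:ℂ) - z‖) = ‖z‖ := by
      rw [mul_comm]
      exact div_mul_cancel₀ _ hnz1
    rw [this]
  have h1 : ‖(1:ℂ) - z‖ + ‖z‖ ≤ 1 := by rw [← hnorm]; exact hb w hw
  have h2 : (1:ℝ) ≤ ‖(1:ℂ) - z‖ + ‖z‖ := by
    have := norm_add_le ((1:ℂ) - z) z
    simpa using this
  have hab : ‖(1:ℂ) - z‖ + ‖z‖ = 1 := le_antisymm h1 h2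
  have ha2 : ‖(1:ℂ) - z‖^2 = (1 - z.re)^2 + z.im^2 := by
    rw [Complex.sq_norm, Complex.normSq_apply]
    simp [Complex.sub_re, Complex.sub_im]
    ring
  have hb2 : ‖z‖^2 = z.re^2 + z.im^2 := by
    rw [Complex.sq_norm, Complex.normSq_apply]
    ring
  have ha : ‖(1:ℂ) - z‖ = 1 - ‖z‖ := by linarith
  have ha2' : (1 - ‖z‖)^2 = (1 - z.re)^2 + z.im^2 := by rw [← ha]; exact ha2
  have hre : z.re = ‖z‖ := by nlinarith [ha2', hb2]
  have him2 : z.im^2 = 0 := by nlinarith [hb2, hre]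
  exact pow_eq_zero_iff two_ne_zero |>.mp him2

end AuxSection

theorem stmt9 (A : Type*) [NormedRing A] [StarRing A] [CStarRing A] [CompleteSpace A]
    [NormedAlgebra ℂ A] [StarModule ℂ A] [NormOneClass A]
    (p : A) (hp_star : star p = p) (hp_idem : p * p = p)
    (M : A →L[ℂ] A) (hM : ∀ x, M x = p * x * p) :
    (numRange (A →L[ℂ] A) M ⊆ {z : ℂ | ∃ r : ℝ, z = (r : ℂ)}) ↔
      ∀ u : unitary A,
        numRange A ((u : A) * p * star (u : A) * p) ⊆ {z : ℂ | ∃ r : ℝ, z = (r : ℂ)} := by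
  have hone : (1:A) ≠ 0 := by
    intro h
    have := norm_one (α := A)
    rw [h, norm_zero] at this
    exact zero_ne_one this
  haveI : Nontrivial A := nontrivial_of_ne 1 0 hone
  have hreal : ∀ z : ℂ, (∃ r : ℝ, z = (r:ℂ)) ↔ z.im = 0 := by
    intro z
    constructor
    · rintro ⟨r, rfl⟩; simp
    · intro h; exact ⟨z.re, by apply Complex.ext <;> simp [h]⟩
  constructor
  · -- forward
    intro hMreal u z hz
    obtain ⟨f, hf, hf1, hfz⟩ := hz
    have hu1 : ‖(u:A)‖ = 1 := CStarRing.norm_coe_unitary u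
    have hus : ‖star (u:A)‖ = 1 := by rw [norm_star]; exact hu1
    let L : (A →L[ℂ] A) →ₗ[ℂ] ℂ :=
      { toFun := fun T => f ((u:A) * T (star (u:A)))
        map_add' := by
          intro T S
          simp [ContinuousLinearMap.add_apply, mul_add, map_add]
        map_smul' := by
          intro c T
          simp [ContinuousLinearMap.smul_apply, mul_smul_comm] }
    have hLb : ∀ T : A →L[ℂ] A, ‖L T‖ ≤ 1 * ‖T‖ := by
      intro T
      rw [one_mul]
      calc ‖f ((u:A) * T (star (u:A)))‖ ≤ ‖f‖ * ‖(u:A) * T (star (u:A))‖ := f.le_opNorm _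
        _ ≤ 1 * (‖(u:A)‖ * ‖T (star (u:A))‖) := by
            rw [hf]
            gcongr
            exact norm_mul_le _ _
        _ ≤ 1 * (1 * (‖T‖ * ‖star (u:A)‖)) := by
            rw [hu1]
            gcongr
            exact T.le_opNorm _
        _ = ‖T‖ := by rw [hus]; ring
    let F : (A →L[ℂ] A) →L[ℂ] ℂ := LinearMap.mkContinuous L 1 hLb
    have hF1 : F (1 : A →L[ℂ] A) = 1 := by
      show f ((u:A) * (1 : A →L[ℂ] A) (star (u:A))) = 1
      rw [ContinuousLinearMap.one_apply, Unitary.mul_star_self_of_mem u.2, hf1]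
    have hFnorm : ‖F‖ = 1 := by
      refine le_antisymm (LinearMap.mkContinuous_norm_le L zero_le_one hLb) ?_
      have hid : ‖(1 : A →L[ℂ] A)‖ = 1 := norm_one
      have := F.le_opNorm (1 : A →L[ℂ] A)
      rw [hF1, hid, mul_one] at this
      simpa using this
    have hFM : F M = z := by
      show f ((u:A) * M (star (u:A))) = z
      rw [hM]
      rw [show (u:A) * (p * star (u:A) * p) = (u:A) * p * star (u:A) * p by
        simp [mul_assoc]]
      exact hfz
    exact hMreal ⟨F, hFnorm, hF1, hFM⟩
  · -- backward
    intro hcond z hz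
    obtain ⟨F, hF, hF1, hFz⟩ := hz
    have hsa : ∀ u : unitary A, star ((u:A) * p * star (u:A) * p) = (u:A) * p * star (u:A) * p := by
      intro u
      apply star_eq_of_states_real
      intro f hf hf1
      have hmem := hcond u ⟨f, hf, hf1, rfl⟩
      rw [Set.mem_setOf_eq, hreal] at hmem
      exact hmem
    have hcomm : ∀ u : unitary A,
        (u : A) * p * star (u : A) * p = p * ((u : A) * p * star (u : A)) := by
      intro u
      have h' := hsa u
      simp only [star_mul, star_star, hp_star] at h'
      simp only [mul_assoc] at h' ⊢
      exact h'.symm ▸ rfl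
    have hcentral := central_of_comm p hp_idem hcomm
    rw [Set.mem_setOf_eq, hreal]
    apply im_zero_of_circle
    intro w hw
    have hwconj : (starRingEnd ℂ) w * w = 1 := by
      rw [mul_comm, Complex.mul_conj]
      norm_cast
      rw [Complex.normSq_eq_norm_sq, hw]
      norm_num
    set v : A := 1 + (w - 1) • p with hv
    have hvstar : star v = 1 + ((starRingEnd ℂ) w - 1) • p := by
      rw [hv, star_add, star_one, star_smul, hp_star]
      congr 1
      simp [map_sub]
    have hmul : ∀ a b : ℂ, (1 + a • p) * (1 + b • p) = 1 + (a + b + a * b) • p := by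
      intro a b
      simp only [add_mul, mul_add, one_mul, mul_one, smul_mul_assoc, mul_smul_comm, smul_smul,
        hp_idem, add_smul, smul_add]
      module
    have hvu : v ∈ unitary A := by
      rw [Unitary.mem_iff]
      constructor
      · rw [hvstar, hv, hmul]
        rw [show (starRingEnd ℂ) w - 1 + (w - 1) + ((starRingEnd ℂ) w - 1) * (w - 1) =
          (starRingEnd ℂ) w * w - 1 by ring, hwconj]
        simp
      · rw [hvstar, hv, hmul]
        rw [show w - 1 + ((starRingEnd ℂ) w - 1) + (w - 1) * ((starRingEnd ℂ) w - 1) =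
          (starRingEnd ℂ) w * w - 1 by ring, hwconj]
        simp
    have hnv : ‖v‖ = 1 := CStarRing.norm_coe_unitary ⟨v, hvu⟩
    set N : A →L[ℂ] A := 1 + (w - 1) • M with hN
    have hNx : ∀ x : A, N x = v * x := by
      intro x
      rw [hN]
      simp only [ContinuousLinearMap.add_apply, ContinuousLinearMap.smul_apply,
        ContinuousLinearMap.one_apply, hM]
      rw [hv, add_mul, one_mul, smul_mul_assoc]
      congr 1
      rw [mul_assoc, ← hcentral x, ← mul_assoc, hp_idem]
    have hNnorm : ‖N‖ ≤ 1 := by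
      apply ContinuousLinearMap.opNorm_le_bound _ zero_le_one
      intro x
      rw [hNx x, one_mul]
      calc ‖v * x‖ ≤ ‖v‖ * ‖x‖ := norm_mul_le _ _
        _ = ‖x‖ := by rw [hnv, one_mul]
    have hFN : ‖F N‖ ≤ 1 := by
      calc ‖F N‖ ≤ ‖F‖ * ‖N‖ := F.le_opNorm N
        _ ≤ 1 := by rw [hF, one_mul]; exact hNnorm
    have hFNval : F N = 1 + (w - 1) * z := by
      rw [hN, map_add, map_smul, hF1, hFz]
      simp [smul_eq_mul]
    rw [hFNval] at hFN
    exact hFN
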